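/- The sequence of natural numbers (n)_{n≥1} ⊂ ℤ_p does not have 1-Poissonian pair correlations. -/

import Mathlib

open Filter Finset MeasureTheory
open scoped Classical

variable (p : ℕ) [hp : Fact p.Prime]

/-- The `i`-th base-`p` digit of a `p`-adic integer. -/
noncomputable def digit (x : ℤ_[p]) (i : ℕ) : ℕ := x.appr (i + 1) / p ^ i % p

/-- The Monna map `φ : ℤ_p → [0,1]`, `φ(Σ aᵢ pⁱ) = Σ aᵢ p^{-i-1}`. -/
noncomputable def monna (x : ℤ_[p]) : ℝ := ∑' i : ℕ, (digit p x i : ℝ) / (p : ℝ) ^ (i + 1)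

/-- Distance of a real number to its nearest integer. -/
noncomputable def nearestDist (x : ℝ) : ℝ := |x - round x|

/-- A real sequence in `[0,1)` has `α`-Poissonian pair correlations. -/
noncomputable def realPPC (α : ℝ) (y : ℕ → ℝ) : Prop :=
  ∀ s : ℝ, 0 ≤ s → Tendsto (fun N : ℕ =>
    (((Finset.Icc 1 N ×ˢ Finset.Icc 1 N).filter
      (fun q : ℕ × ℕ => q.1 ≠ q.2 ∧ nearestDist (y q.1 - y q.2) ≤ s / (N : ℝ) ^ α)).card : ℝ)
      / (N : ℝ) ^ (2 - α)) atTop (nhds (2 * s))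

/-- A `p`-adic sequence has `α`-Poissonian pair correlations with respect to the
(normalized) Haar measure `μ` on `ℤ_p`. -/
noncomputable def padicPPC [MeasurableSpace ℤ_[p]] (μ : Measure ℤ_[p]) (α : ℝ)
    (x : ℕ → ℤ_[p]) : Prop :=
  ∀ s : ℝ, 0 < s → Tendsto (fun N : ℕ =>
    (((Finset.Icc 1 N ×ˢ Finset.Icc 1 N).filter
      (fun q : ℕ × ℕ => q.1 ≠ q.2 ∧ ‖x q.1 - x q.2‖ ≤ s / (N : ℝ) ^ α)).card : ℝ)
      / ((N : ℝ) ^ 2 * (μ {z : ℤ_[p] | ‖z‖ ≤ s / (N : ℝ) ^ α}).toReal)) atTop (nhds 1)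

/-- The `i`-th base-`p` digit of a real number in `[0,1)`. -/
noncomputable def realDigit (y : ℝ) (i : ℕ) : ℕ := (⌊y * (p : ℝ) ^ (i + 1)⌋ % p).toNat

/-- The inverse Monna map `φ⁻¹ : [0,1) → ℤ_p`, built from the base-`p` digits of `y`
(the floor-digit expansion, which has `aᵢ ≠ p-1` infinitely often). -/
noncomputable def invMonna (y : ℝ) : ℤ_[p] := ∑' i : ℕ, (realDigit p y i : ℤ_[p]) * (p : ℤ_[p]) ^ i

theorem stmt15 [MeasurableSpace ℤ_[p]] [BorelSpace ℤ_[p]]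
    (μ : Measure ℤ_[p]) [μ.IsAddHaarMeasure] (hμ : μ Set.univ = 1) :
    ¬ padicPPC p μ 1 (fun n => (n : ℤ_[p])) := by
  intro h
  have h1 := h 1 one_pos
  have htend : Tendsto (fun k : ℕ => p ^ k) atTop atTop :=
    tendsto_pow_atTop_atTop_of_one_lt hp.out.one_lt
  have h2 := h1.comp htend
  have hzero : ∀ k : ℕ,
      ((Finset.Icc 1 (p ^ k) ×ˢ Finset.Icc 1 (p ^ k)).filter
        (fun q : ℕ × ℕ => q.1 ≠ q.2 ∧
          ‖((q.1 : ℤ_[p]) - (q.2 : ℤ_[p]))‖ ≤ 1 / ((p ^ k : ℕ) : ℝ) ^ (1 : ℝ))) = ∅ := by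
    intro k
    rw [Finset.filter_eq_empty_iff]
    rintro ⟨i, j⟩ hq ⟨hne, hle⟩
    simp only [Finset.mem_product, Finset.mem_Icc] at hq
    have hcast : ((i : ℤ_[p]) - (j : ℤ_[p])) = (((i : ℤ) - (j : ℤ) : ℤ) : ℤ_[p]) := by
      push_cast; ring
    have hrad : (1 : ℝ) / ((p ^ k : ℕ) : ℝ) ^ (1 : ℝ) = (p : ℝ) ^ (-(k : ℤ)) := by
      rw [Real.rpow_one]
      push_cast
      rw [zpow_neg, zpow_natCast, one_div]
    rw [hcast, hrad, PadicInt.norm_int_le_pow_iff_dvd] at hle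
    have habs : |(i : ℤ) - (j : ℤ)| < (p : ℤ) ^ k := by
      have h1 : (1 : ℤ) ≤ i := by exact_mod_cast hq.1.1
      have h2 : (i : ℤ) ≤ (p : ℤ) ^ k := by exact_mod_cast hq.1.2
      have h3 : (1 : ℤ) ≤ j := by exact_mod_cast hq.2.1
      have h4 : (j : ℤ) ≤ (p : ℤ) ^ k := by exact_mod_cast hq.2.2
      rw [abs_sub_lt_iff]
      constructor <;> linarith
    have := Int.eq_zero_of_abs_lt_dvd hle habs
    have : i = j := by omega
    exact hne this
  have h3 : Tendsto (fun _ : ℕ => (0 : ℝ)) atTop (nhds 1) := by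
    refine h2.congr' ?_
    filter_upwards [] with k
    simp only [Function.comp]
    rw [hzero k]
    simp
  have := tendsto_nhds_unique h3 tendsto_const_nhds
  norm_num at this
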